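/- arXiv:2112.00632 — 2 statements merged into one kernel-verified Lean document; each statement's English description precedes it below -/
import Mathlib

section
/- For every natural number n, the constant term of the Laurent polynomial (x + y + 1/(xy))^n in two variables equals (3d)!/(d!)^3 if n = 3d for some natural number d, and equals 0 otherwise. -/
open Finset

/-- The mirror of ℙ²: the Laurent polynomial `x + y + 1/(xy)`, modelled as an element
of the group algebra of `ℤ × ℤ` (exponent lattice) over `ℚ`. -/
noncomputable def mirrorP2 : AddMonoidAlgebra ℚ (ℤ × ℤ) :=
  AddMonoidAlgebra.single (1, 0) 1 + AddMonoidAlgebra.single (0, 1) 1 +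
    AddMonoidAlgebra.single (-1, -1) 1

lemma mirrorP2_pow_expand (n : ℕ) : (mirrorP2 ^ n : AddMonoidAlgebra ℚ (ℤ × ℤ)) =
    ∑ i ∈ range (n+1), ∑ j ∈ range (i+1),
      AddMonoidAlgebra.single ((j : ℤ) - ((n:ℤ) - i), (i : ℤ) - j - ((n:ℤ) - i))
        ((n.choose i : ℚ) * (i.choose j : ℚ)) := by
  rw [mirrorP2, add_pow]
  refine Finset.sum_congr rfl fun i hi => ?_
  rw [add_pow, Finset.sum_mul, Finset.sum_mul]
  refine Finset.sum_congr rfl fun j hj => ?_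
  simp only [mem_range] at hi hj
  simp only [AddMonoidAlgebra.natCast_def, AddMonoidAlgebra.single_pow, one_pow,
    AddMonoidAlgebra.single_mul_single]
  congr 1
  · simp only [Prod.ext_iff, Prod.smul_mk, Prod.fst_add, Prod.snd_add, smul_eq_mul,
      Prod.fst_zero, Prod.snd_zero, nsmul_eq_mul]
    have c1 : ((n - i : ℕ) : ℤ) = (n : ℤ) - i := by omega
    have c2 : ((i - j : ℕ) : ℤ) = (i : ℤ) - j := by omega
    constructor <;> omega
  · ring

/-- The constant term of `(x + y + 1/(xy))^n` equals `(3d)!/(d!)³` if `n = 3d`,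
and `0` otherwise. -/
theorem stmt2 (n : ℕ) :
    (mirrorP2 ^ n).coeff (0, 0) =
      if 3 ∣ n then (Nat.factorial n : ℚ) / ((Nat.factorial (n / 3) : ℚ) ^ 3) else 0 := by
  have hexp := mirrorP2_pow_expand n
  rw [hexp]
  simp only [AddMonoidAlgebra.coeff_sum, AddMonoidAlgebra.coeff_single]
  rw [Finset.sum_apply']
  rw [Finset.sum_congr rfl fun i _ => Finset.sum_apply' (0, 0)]
  simp only [Finsupp.single_apply]
  -- condition analysis
  by_cases h3 : 3 ∣ n
  · obtain ⟨d, rfl⟩ := h3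
    rw [if_pos ⟨d, rfl⟩]
    rw [Finset.sum_eq_single (2 * d)]
    · rw [Finset.sum_eq_single d]
      · have hcond : (((d : ℤ) - ((3 * d : ℕ) - (2 * d : ℕ)), ((2 * d : ℕ) : ℤ) - d - (((3 * d : ℕ) : ℤ) - (2 * d : ℕ))) = ((0 : ℤ), (0 : ℤ))) := by
          push_cast
          simp only [Prod.mk.injEq]
          constructor <;> ring
        rw [if_pos hcond]
        have h1 : (2 * d) ≤ 3 * d := by omega
        have h2 : d ≤ 2 * d := by omega
        rw [Nat.cast_choose ℚ h1, Nat.cast_choose ℚ h2]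
        have e1 : 3 * d - 2 * d = d := by omega
        have e2 : 2 * d - d = d := by omega
        rw [e1, e2]
        have hd : (Nat.factorial d : ℚ) ≠ 0 := Nat.cast_ne_zero.mpr (Nat.factorial_ne_zero d)
        have h2d : (Nat.factorial (2 * d) : ℚ) ≠ 0 := Nat.cast_ne_zero.mpr (Nat.factorial_ne_zero _)
        have hq : 3 * d / 3 = d := by omega
        rw [hq]
        field_simp
      · intro j hj hjd
        rw [if_neg]
        intro hc
        rw [Prod.ext_iff] at hc
        obtain ⟨hc1, hc2⟩ := hc
        push_cast at hc1 hc2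
        omega
      · intro h
        exfalso
        apply h
        simp only [mem_range]
        omega
    · intro i hi hid
      apply Finset.sum_eq_zero
      intro j hj
      rw [if_neg]
      intro hc
      rw [Prod.ext_iff] at hc
      obtain ⟨hc1, hc2⟩ := hc
      push_cast at hc1 hc2
      omega
    · intro h
      exfalso
      apply h
      simp only [mem_range]
      omega
  · rw [if_neg h3]
    apply Finset.sum_eq_zero
    intro i hi
    apply Finset.sum_eq_zero
    intro j hj
    rw [if_neg]
    intro hc
    rw [Prod.ext_iff] at hc
    obtain ⟨hc1, hc2⟩ := hc
    push_cast at hc1 hc2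
    exact h3 ⟨n - i, by omega⟩
end

section
/- Let V be a finite-dimensional complex vector space of dimension r ≥ 1 and let T_1, …, T_s ∈ GL(V) satisfy T_1·T_2·…·T_s = id. If V has no nonzero vector fixed by all the T_i and no nonzero vector fixed by all the adjoints T_i^* (equivalently, the group generated by the T_i has no trivial sub- or quotient representation on V), then Σ_{i=1}^s dim(V / ker(T_i − id)) ≥ 2r. -/
open Module LinearMap


/-- Scott's lemma: if `T₁,…,T_s` are invertible linear maps on a finite-dimensional
complex vector space `V` of dimension `r ≥ 1` with `T₁·T₂⋯T_s = id`, and `V` has no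
nonzero vector fixed by all the `Tᵢ` and no nonzero linear functional fixed by all the
`Tᵢ` (no trivial sub- or quotient representation), then
`Σᵢ dim(V / ker(Tᵢ − id)) ≥ 2r`. -/
theorem stmt11 (V : Type*) [AddCommGroup V] [Module ℂ V] [FiniteDimensional ℂ V]
    (hr : 1 ≤ Module.finrank ℂ V) (s : ℕ) (T : Fin s → (V ≃ₗ[ℂ] V))
    (hprod : (List.ofFn T).prod = 1)
    (hsub : ∀ v : V, (∀ i, T i v = v) → v = 0)
    (hquot : ∀ φ : Module.Dual ℂ V, (∀ i, φ.comp (T i).toLinearMap = φ) → φ = 0) :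
    2 * Module.finrank ℂ V ≤
      ∑ i : Fin s,
        Module.finrank ℂ (V ⧸ LinearMap.ker ((T i).toLinearMap - LinearMap.id)) := by
  classical
  set A : Fin s → (V →ₗ[ℂ] V) := fun i => (T i).toLinearMap - LinearMap.id with hA
  have hAapp : ∀ (i : Fin s) (v : V), A i v = T i v - v := by
    intro i v; rw [hA]; simp
  set hom := (LinearEquiv.automorphismGroup.toLinearMapMonoidHom : (V ≃ₗ[ℂ] V) →* (V →ₗ[ℂ] V))
    with hhom
  set L : List (V →ₗ[ℂ] V) := (List.ofFn T).map hom with hL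
  set Q : ℕ → (V →ₗ[ℂ] V) := fun n => (L.take n).prod with hQ
  have hQ0 : Q 0 = 1 := by simp [hQ]
  have hQs : Q s = 1 := by
    have hlen : L.length = s := by simp [hL]
    have htake : L.take s = L := by rw [← hlen, List.take_length]
    rw [hQ]; simp only [htake]; rw [hL]
    rw [← map_list_prod hom, hprod, map_one]
  have hQeq : ∀ n, ∃ e : V ≃ₗ[ℂ] V, Q n = hom e := by
    intro n
    refine ⟨((List.ofFn T).take n).prod, ?_⟩
    simp only [hQ, hL, ← List.map_take]
    exact (map_list_prod hom _).symm
  have hQsucc : ∀ i : Fin s, Q (i + 1) = Q i * (T i).toLinearMap := by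
    intro i
    have hi : (i : ℕ) < L.length := by simp [hL]
    have := List.prod_take_succ L i hi
    rw [hQ]
    simp only [this]
    congr 1
    simp only [hL, List.getElem_map, List.getElem_ofFn]
    rfl
  set B : Fin s → (V →ₗ[ℂ] V) := fun i => Q (i + 1) - Q i with hBdef
  have hBapp : ∀ (i : Fin s) (v : V), B i v = Q i (A i v) := by
    intro i v
    rw [hBdef]
    simp only [LinearMap.sub_apply, hQsucc i, Module.End.mul_apply, hAapp, map_sub]
    rfl
  have hBsum : ∑ i : Fin s, B i = 0 := by
    rw [hBdef]
    rw [Fin.sum_univ_eq_sum_range (fun n => Q (n + 1) - Q n) s, Finset.sum_range_sub Q s,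
      hQs, hQ0, sub_self]
  have hQinj : ∀ n, Function.Injective (Q n) := by
    intro n
    obtain ⟨e, he⟩ := hQeq n
    rw [he]
    exact e.injective
  have hkerB : ∀ i, LinearMap.ker (B i) = LinearMap.ker (A i) := by
    intro i
    ext v
    simp only [LinearMap.mem_ker, hBapp]
    constructor
    · intro h
      have := hQinj i (by simpa using h : Q i (A i v) = Q i 0)
      exact this
    · intro h; rw [h, map_zero]
  have hBcomp : ∀ i, B i = Q i ∘ₗ A i := by
    intro i; ext v; simpa using hBapp i v
  have hrankB : ∀ i : Fin s,
      finrank ℂ (LinearMap.range (B i)) = finrank ℂ (V ⧸ LinearMap.ker (A i)) := by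
    intro i
    obtain ⟨e, he⟩ := hQeq i
    rw [hBcomp i, LinearMap.range_comp, he]
    have h1 : (hom e) = (e : V →ₗ[ℂ] V) := rfl
    rw [h1, LinearEquiv.finrank_map_eq e]
    exact ((A i).quotKerEquivRange).finrank_eq.symm
  -- the two maps
  set F : V →ₗ[ℂ] (∀ i : Fin s, LinearMap.range (B i)) :=
    LinearMap.pi (fun i => (B i).rangeRestrict) with hF
  set S : (∀ i : Fin s, LinearMap.range (B i)) →ₗ[ℂ] V :=
    ∑ i : Fin s, (LinearMap.range (B i)).subtype ∘ₗ LinearMap.proj i with hS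
  have hSapp : ∀ w, S w = ∑ i : Fin s, (w i : V) := by
    intro w
    rw [hS]
    simp [LinearMap.sum_apply]
  have hFinj : Function.Injective F := by
    rw [← LinearMap.ker_eq_bot, Submodule.eq_bot_iff]
    intro v hv
    apply hsub
    intro i
    have hv' : F v = 0 := hv
    have h0 : ((F v i : V)) = 0 := by rw [hv']; rfl
    have h1 : B i v = 0 := by
      rw [hF] at h0
      simpa [LinearMap.pi_apply] using h0
    have h2 : v ∈ LinearMap.ker (A i) := by
      rw [← hkerB i]; exact h1
    have h3 : A i v = 0 := h2
    rw [hAapp] at h3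
    exact sub_eq_zero.mp h3
  have hSF : ∀ v, S (F v) = 0 := by
    intro v
    rw [hSapp]
    have h2 : ∑ i : Fin s, B i v = 0 := by
      rw [← LinearMap.sum_apply, hBsum]; rfl
    have h3 : ∀ i : Fin s, ((F v i : V)) = B i v := by
      intro i; rw [hF]; simp [LinearMap.pi_apply]
    rw [Finset.sum_congr rfl fun i _ => h3 i]
    exact h2
  have hSsurj : LinearMap.range S = ⊤ := by
    by_contra hne
    obtain ⟨φ, hφne, hφ⟩ :=
      Submodule.exists_dual_map_eq_bot_of_lt_top (lt_top_iff_ne_top.mpr hne) inferInstance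
    have hφ0 : ∀ x ∈ LinearMap.range S, φ x = 0 := by
      intro x hx
      have : φ x ∈ (LinearMap.range S).map φ := ⟨x, hx, rfl⟩
      rw [hφ] at this
      simpa using this
    have hφB : ∀ (i : Fin s) (v : V), φ (B i v) = 0 := by
      intro i v
      apply hφ0
      refine ⟨Pi.single i ⟨B i v, ⟨v, rfl⟩⟩, ?_⟩
      rw [hSapp]
      rw [Finset.sum_eq_single i]
      · rw [Pi.single_eq_same]
      · intro j _ hj
        rw [Pi.single_eq_of_ne hj]; rfl
      · simp
    have hφQ : ∀ n, n ≤ s → φ ∘ₗ Q n = φ := by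
      intro n
      induction n with
      | zero => intro _; rw [hQ0]; ext v; rfl
      | succ n ih =>
        intro hn
        have hns : n < s := hn
        have ihn := ih (le_of_lt hns)
        have hq : Q (n + 1) = Q n + B ⟨n, hns⟩ := by
          rw [hBdef]; simp
        rw [hq]
        ext v
        simp only [LinearMap.comp_apply, LinearMap.add_apply, map_add, hφB, add_zero]
        exact congrFun (congrArg DFunLike.coe ihn) v
    have hφT : ∀ i : Fin s, φ.comp (T i).toLinearMap = φ := by
      intro i
      ext v
      have h2 : φ (B i v) = 0 := hφB i v
      rw [hBapp] at h2
      have h4 : φ (A i v) = 0 := by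
        have := congrFun (congrArg DFunLike.coe (hφQ i (le_of_lt i.isLt))) (A i v)
        rw [LinearMap.comp_apply] at this
        rw [← this]; exact h2
      rw [hAapp, map_sub, sub_eq_zero] at h4
      exact h4
    exact hφne (hquot φ hφT)
  -- rank counting
  have hW : finrank ℂ (∀ i : Fin s, LinearMap.range (B i))
      = ∑ i : Fin s, finrank ℂ (LinearMap.range (B i)) := Module.finrank_pi_fintype ℂ
  have hrn := LinearMap.finrank_range_add_finrank_ker S
  have hrange : finrank ℂ (LinearMap.range S) = finrank ℂ V := by
    rw [hSsurj, finrank_top]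
  have hFle : LinearMap.range F ≤ LinearMap.ker S := by
    rintro x ⟨v, rfl⟩
    exact hSF v
  have hkerge : finrank ℂ V ≤ finrank ℂ (LinearMap.ker S) := by
    calc finrank ℂ V = finrank ℂ (LinearMap.range F) :=
          (LinearMap.finrank_range_of_inj hFinj).symm
    _ ≤ finrank ℂ (LinearMap.ker S) := Submodule.finrank_mono hFle
  have hmain : 2 * finrank ℂ V ≤ finrank ℂ (∀ i : Fin s, LinearMap.range (B i)) := by
    omega
  calc 2 * finrank ℂ V ≤ ∑ i : Fin s, finrank ℂ (LinearMap.range (B i)) := by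
        rw [← hW]; exact hmain
  _ = ∑ i : Fin s, finrank ℂ (V ⧸ LinearMap.ker (A i)) :=
      Finset.sum_congr rfl fun i _ => hrankB i
end
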